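/- (Conditional regret-capacity theorem.) Suppose there exists a prior probability measure w* on Θ with I_{w*}(θ;Y|X^n) = sup_w I_w(θ;Y|X^n), the supremum being over all prior probability measures w on Θ. Then the minimax batch regret satisfies min over batch predictors p̂ of sup_{θ∈Θ} R(p̂,θ) = I_{w*}(θ;Y|X^n), and the minimum is achieved by the conditional mixture predictor p̂*(y|x^n) = ∫_Θ p_θ(y) w*(dθ|x^n), where w*(dθ|x^n) = w*(dθ) p_θ(x^n)/∫_Θ p_{θ'}(x^n) w*(dθ') is the posterior of w* given x^n. -/

import Mathlib

open MeasureTheory Real Filter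

/-- `q` is a probability mass function on the finite type `B`. -/
def IsPMF {B : Type*} [Fintype B] (q : B → ℝ) : Prop :=
  (∀ y, 0 ≤ q y) ∧ ∑ y, q y = 1

/-- Probability of a tuple of `n` i.i.d. batches: `p_θ(x^n) = ∏ i, p_θ(x_i)`. -/
def prodP {Θ B : Type*} (p : Θ → B → ℝ) (n : ℕ) (θ : Θ) (x : Fin n → B) : ℝ :=
  ∏ i, p θ (x i)

/-- The batch regret `R(p̂,θ) = Σ_{x^n} p_θ(x^n) Σ_y p_θ(y) log (p_θ(y) / p̂(y|x^n))`. -/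
noncomputable def batchRegret {Θ B : Type*} [Fintype B] (p : Θ → B → ℝ) (n : ℕ)
    (phat : (Fin n → B) → B → ℝ) (θ : Θ) : ℝ :=
  ∑ x : Fin n → B, prodP p n θ x * ∑ y : B, p θ y * Real.log (p θ y / phat x y)

/-- The conditional mixture predictor
`p̂_w(y|x^n) = ∫ p_θ(y) w(dθ|x^n) = (∫ p_θ(x^n) p_θ(y) w(dθ)) / (∫ p_θ(x^n) w(dθ))`. -/
noncomputable def mixPred {Θ B : Type*} [MeasurableSpace Θ] [Fintype B]
    (p : Θ → B → ℝ) (n : ℕ) (w : Measure Θ) (x : Fin n → B) (y : B) : ℝ :=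
  (∫ θ, prodP p n θ x * p θ y ∂w) / (∫ θ, prodP p n θ x ∂w)

/-- The conditional mutual information
`I_w(θ;Y|X^n) = E[log (p_θ(Y) / p_w(Y|X^n))]`, the expectation being over the joint law
`w(dθ) p_θ(x^n) p_θ(y)`. -/
noncomputable def condMI {Θ B : Type*} [MeasurableSpace Θ] [Fintype B]
    (p : Θ → B → ℝ) (n : ℕ) (w : Measure Θ) : ℝ :=
  ∫ θ, (∑ x : Fin n → B, prodP p n θ x *
    ∑ y : B, p θ y * Real.log (p θ y / mixPred p n w x y)) ∂w

section Basics
set_option linter.unusedSectionVars false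
set_option linter.unusedVariables false
variable {Θ B : Type*} [Fintype B] [MeasurableSpace Θ]
  {p : Θ → B → ℝ} {n : ℕ}

lemma p_le_one (hp : ∀ θ, IsPMF (p θ)) (θ : Θ) (y : B) : p θ y ≤ 1 := by
  have := (hp θ).2
  calc p θ y ≤ ∑ y', p θ y' :=
        Finset.single_le_sum (fun i _ => (hp θ).1 i) (Finset.mem_univ y)
    _ = 1 := this

lemma prodP_nonneg (hp : ∀ θ, IsPMF (p θ)) (θ : Θ) (x : Fin n → B) :
    0 ≤ prodP p n θ x :=
  Finset.prod_nonneg fun i _ => (hp θ).1 _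

lemma prodP_le_one (hp : ∀ θ, IsPMF (p θ)) (θ : Θ) (x : Fin n → B) :
    prodP p n θ x ≤ 1 :=
  Finset.prod_le_one (fun i _ => (hp θ).1 _) (fun i _ => p_le_one hp θ _)

lemma sum_prodP (hp : ∀ θ, IsPMF (p θ)) (θ : Θ) :
    ∑ x : Fin n → B, prodP p n θ x = 1 := by
  classical
  have h := Finset.prod_univ_sum (κ := fun _ : Fin n => B)
    (t := fun _ => Finset.univ) (f := fun _ b => p θ b)
  simp only [(hp θ).2, Finset.prod_const_one, Fintype.piFinset_univ] at h
  exact h.symm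

lemma meas_prodP (hmeas : ∀ z : B, Measurable fun θ => p θ z) (x : Fin n → B) :
    Measurable fun θ => prodP p n θ x :=
  Finset.measurable_prod _ fun i _ => hmeas (x i)

lemma integrable_prodP (hp : ∀ θ, IsPMF (p θ)) (hmeas : ∀ z : B, Measurable fun θ => p θ z)
    (w : Measure Θ) [IsFiniteMeasure w] (x : Fin n → B) :
    Integrable (fun θ => prodP p n θ x) w := by
  refine (integrable_const (1:ℝ)).mono' (meas_prodP hmeas x).aestronglyMeasurable ?_
  refine ae_of_all _ fun θ => ?_
  rw [Real.norm_eq_abs, abs_of_nonneg (prodP_nonneg hp θ x)]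
  exact prodP_le_one hp θ x

lemma integrable_prodP_mul (hp : ∀ θ, IsPMF (p θ)) (hmeas : ∀ z : B, Measurable fun θ => p θ z)
    (w : Measure Θ) [IsFiniteMeasure w] (x : Fin n → B) (y : B) :
    Integrable (fun θ => prodP p n θ x * p θ y) w := by
  refine (integrable_const (1:ℝ)).mono'
    ((meas_prodP hmeas x).mul (hmeas y)).aestronglyMeasurable ?_
  refine ae_of_all _ fun θ => ?_
  rw [Real.norm_eq_abs, abs_of_nonneg (mul_nonneg (prodP_nonneg hp θ x) ((hp θ).1 y))]
  calc prodP p n θ x * p θ y ≤ 1 * 1 :=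
    mul_le_mul (prodP_le_one hp θ x) (p_le_one hp θ y) ((hp θ).1 y) zero_le_one
  _ = 1 := one_mul 1

end Basics

section ND
set_option linter.unusedSectionVars false
variable {Θ B : Type*} [Fintype B] [MeasurableSpace Θ]
  {p : Θ → B → ℝ} {n : ℕ}
  (hp : ∀ θ, IsPMF (p θ)) (hmeas : ∀ z : B, Measurable fun θ => p θ z)
  (w : Measure Θ) [IsProbabilityMeasure w]
include hp hmeas

lemma NN_nonneg (x : Fin n → B) (y : B) : 0 ≤ ∫ θ, prodP p n θ x * p θ y ∂w :=
  integral_nonneg fun θ => mul_nonneg (prodP_nonneg hp θ x) ((hp θ).1 y)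

lemma DD_nonneg (x : Fin n → B) : 0 ≤ ∫ θ, prodP p n θ x ∂w :=
  integral_nonneg fun θ => prodP_nonneg hp θ x

lemma NN_le_DD (x : Fin n → B) (y : B) :
    ∫ θ, prodP p n θ x * p θ y ∂w ≤ ∫ θ, prodP p n θ x ∂w := by
  refine integral_mono (integrable_prodP_mul hp hmeas w x y) (integrable_prodP hp hmeas w x)
    fun θ => ?_
  calc prodP p n θ x * p θ y ≤ prodP p n θ x * 1 :=
        mul_le_mul_of_nonneg_left (p_le_one hp θ y) (prodP_nonneg hp θ x)
    _ = prodP p n θ x := mul_one _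

lemma sum_NN (x : Fin n → B) :
    ∑ y : B, ∫ θ, prodP p n θ x * p θ y ∂w = ∫ θ, prodP p n θ x ∂w := by
  rw [← integral_finset_sum _ (fun y _ => integrable_prodP_mul hp hmeas w x y)]
  refine integral_congr_ae (ae_of_all _ fun θ => ?_)
  show (∑ y : B, prodP p n θ x * p θ y) = prodP p n θ x
  rw [← Finset.mul_sum, (hp θ).2, mul_one]

lemma mixPred_nonneg (x : Fin n → B) (y : B) : 0 ≤ mixPred p n w x y :=
  div_nonneg (NN_nonneg hp hmeas w x y) (DD_nonneg hp hmeas w x)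

lemma NN_eq_zero_of_DD_eq_zero (x : Fin n → B) (y : B)
    (h : ∫ θ, prodP p n θ x ∂w = 0) : ∫ θ, prodP p n θ x * p θ y ∂w = 0 :=
  le_antisymm (h ▸ NN_le_DD hp hmeas w x y) (NN_nonneg hp hmeas w x y)

lemma sum_mixPred (x : Fin n → B) (h : ∫ θ, prodP p n θ x ∂w ≠ 0) :
    ∑ y : B, mixPred p n w x y = 1 := by
  unfold mixPred
  rw [← Finset.sum_div, sum_NN hp hmeas w x, div_self h]

lemma sum_mixPred_le_one (x : Fin n → B) : ∑ y : B, mixPred p n w x y ≤ 1 := by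
  by_cases h : ∫ θ, prodP p n θ x ∂w = 0
  · have : ∀ y : B, mixPred p n w x y = 0 := by
      intro y; unfold mixPred; rw [h, div_zero]
    simp [this]
  · exact le_of_eq (sum_mixPred hp hmeas w x h)

lemma ae_zero_of_NN_eq_zero (x : Fin n → B) (y : B)
    (h : ∫ θ, prodP p n θ x * p θ y ∂w = 0) :
    ∀ᵐ θ ∂w, prodP p n θ x * p θ y = 0 := by
  have := (integral_eq_zero_iff_of_nonneg
    (fun θ => mul_nonneg (prodP_nonneg hp θ x) ((hp θ).1 y))
    (integrable_prodP_mul hp hmeas w x y)).1 h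
  filter_upwards [this] with θ hθ using hθ

lemma mixPred_pos_of_NN_pos (x : Fin n → B) (y : B)
    (h : 0 < ∫ θ, prodP p n θ x * p θ y ∂w) : 0 < mixPred p n w x y :=
  div_pos h (lt_of_lt_of_le h (NN_le_DD hp hmeas w x y))

end ND

section Gibbs
set_option linter.unusedSectionVars false

/-- Gibbs' inequality: `∑ q (log q - log r) ≥ 0` for a pmf `q` and subprobability `r`
with `r` positive on the support of `q`. -/
lemma gibbs {B : Type*} [Fintype B] (q r : B → ℝ)
    (hq0 : ∀ y, 0 ≤ q y) (hq1 : ∑ y, q y = 1)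
    (hr0 : ∀ y, 0 ≤ r y) (hr1 : ∑ y, r y ≤ 1)
    (hqr : ∀ y, 0 < q y → 0 < r y) :
    0 ≤ ∑ y, q y * (Real.log (q y) - Real.log (r y)) := by
  classical
  rw [← neg_nonpos, ← Finset.sum_neg_distrib]
  have key : ∀ y, -(q y * (Real.log (q y) - Real.log (r y))) ≤ r y - q y := by
    intro y
    rcases eq_or_lt_of_le (hq0 y) with h | h
    · simp [← h, hr0 y]
    · have hr := hqr y h
      have hlog : Real.log (r y) - Real.log (q y) = Real.log (r y / q y) :=
        (Real.log_div (ne_of_gt hr) (ne_of_gt h)).symm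
      have hle : Real.log (r y / q y) ≤ r y / q y - 1 :=
        Real.log_le_sub_one_of_pos (div_pos hr h)
      calc -(q y * (Real.log (q y) - Real.log (r y)))
          = q y * (Real.log (r y) - Real.log (q y)) := by ring
        _ = q y * Real.log (r y / q y) := by rw [hlog]
        _ ≤ q y * (r y / q y - 1) := mul_le_mul_of_nonneg_left hle (le_of_lt h)
        _ = r y - q y := by field_simp
  calc ∑ y, -(q y * (Real.log (q y) - Real.log (r y)))
      ≤ ∑ y, (r y - q y) := Finset.sum_le_sum fun y _ => key y
    _ = (∑ y, r y) - ∑ y, q y := Finset.sum_sub_distrib _ _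
    _ ≤ 1 - 1 := by rw [hq1]; exact sub_le_sub_right hr1 1
    _ = 0 := sub_self 1

end Gibbs

section BR
set_option linter.unusedSectionVars false
variable {Θ B : Type*} [Fintype B] [MeasurableSpace Θ]
  {p : Θ → B → ℝ} {n : ℕ}

lemma batchRegret_eq_dsum (phat : (Fin n → B) → B → ℝ) (θ : Θ) :
    batchRegret p n phat θ =
      ∑ x : Fin n → B, ∑ y : B, prodP p n θ x * (p θ y * Real.log (p θ y / phat x y)) := by
  unfold batchRegret
  exact Finset.sum_congr rfl fun x _ => Finset.mul_sum _ _ _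

lemma term_abs_le (hp : ∀ θ, IsPMF (p θ)) (θ : Θ) (y : B) (c : ℝ) :
    |p θ y * Real.log (p θ y / c)| ≤ 1 + |Real.log c| := by
  have h0 := (hp θ).1 y
  have h1 := p_le_one hp θ y
  rcases eq_or_lt_of_le h0 with h | h
  · rw [← h]; simp; positivity
  · by_cases hc : c = 0
    · rw [hc, div_zero, Real.log_zero, mul_zero, abs_zero]; positivity
    · have hplogp : |p θ y * Real.log (p θ y)| ≤ 1 := by
        rw [abs_mul, abs_of_nonneg h0,
          abs_of_nonpos (Real.log_nonpos h0 h1), ← Real.log_inv]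
        have hinv : 0 < (p θ y)⁻¹ := inv_pos.2 h
        calc p θ y * Real.log (p θ y)⁻¹
            ≤ p θ y * ((p θ y)⁻¹ - 1) :=
              mul_le_mul_of_nonneg_left (Real.log_le_sub_one_of_pos hinv) h0
          _ = 1 - p θ y := by field_simp
          _ ≤ 1 := by linarith
      rw [Real.log_div (ne_of_gt h) hc, mul_sub]
      calc |p θ y * Real.log (p θ y) - p θ y * Real.log c|
          ≤ |p θ y * Real.log (p θ y)| + |p θ y * Real.log c| := abs_sub _ _
        _ ≤ 1 + |Real.log c| := by
            refine add_le_add hplogp ?_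
            rw [abs_mul, abs_of_nonneg h0]
            calc p θ y * |Real.log c| ≤ 1 * |Real.log c| :=
                  mul_le_mul_of_nonneg_right h1 (abs_nonneg _)
              _ = |Real.log c| := one_mul _

lemma batchRegret_abs_le (hp : ∀ θ, IsPMF (p θ)) (phat : (Fin n → B) → B → ℝ) (θ : Θ) :
    |batchRegret p n phat θ| ≤
      ∑ x : Fin n → B, ∑ y : B, (1 + |Real.log (phat x y)|) := by
  rw [batchRegret_eq_dsum]
  calc |∑ x : Fin n → B, ∑ y : B, prodP p n θ x * (p θ y * Real.log (p θ y / phat x y))|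
      ≤ ∑ x : Fin n → B, |∑ y : B, prodP p n θ x * (p θ y * Real.log (p θ y / phat x y))| :=
        Finset.abs_sum_le_sum_abs _ _
    _ ≤ ∑ x : Fin n → B, ∑ y : B, |prodP p n θ x * (p θ y * Real.log (p θ y / phat x y))| :=
        Finset.sum_le_sum fun x _ => Finset.abs_sum_le_sum_abs _ _
    _ ≤ ∑ x : Fin n → B, ∑ y : B, (1 + |Real.log (phat x y)|) := by
        refine Finset.sum_le_sum fun x _ => Finset.sum_le_sum fun y _ => ?_
        rw [abs_mul, abs_of_nonneg (prodP_nonneg hp θ x)]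
        calc prodP p n θ x * |p θ y * Real.log (p θ y / phat x y)|
            ≤ 1 * (1 + |Real.log (phat x y)|) :=
              mul_le_mul (prodP_le_one hp θ x) (term_abs_le hp θ y _) (abs_nonneg _)
                zero_le_one
          _ = 1 + |Real.log (phat x y)| := one_mul _

lemma meas_batchRegret (hmeas : ∀ z : B, Measurable fun θ => p θ z)
    (phat : (Fin n → B) → B → ℝ) :
    Measurable fun θ => batchRegret p n phat θ := by
  unfold batchRegret
  refine Finset.measurable_sum _ fun x _ => (meas_prodP hmeas x).mul ?_
  refine Finset.measurable_sum _ fun y _ => (hmeas y).mul ?_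
  exact Real.measurable_log.comp ((hmeas y).div_const _)

lemma integrable_batchRegret (hp : ∀ θ, IsPMF (p θ))
    (hmeas : ∀ z : B, Measurable fun θ => p θ z)
    (w : Measure Θ) [IsFiniteMeasure w] (phat : (Fin n → B) → B → ℝ) :
    Integrable (fun θ => batchRegret p n phat θ) w := by
  refine (integrable_const (∑ x : Fin n → B, ∑ y : B, (1 + |Real.log (phat x y)|))).mono'
    (meas_batchRegret hmeas phat).aestronglyMeasurable
    (ae_of_all _ fun θ => ?_)
  exact batchRegret_abs_le hp phat θ
end BR

section KeyL
set_option linter.unusedSectionVars false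
variable {Θ B : Type*} [Fintype B] [MeasurableSpace Θ]
  {p : Θ → B → ℝ} {n : ℕ}

/-- Key lemma: the conditional mixture predictor minimizes the average regret. -/
lemma keyL (hp : ∀ θ, IsPMF (p θ)) (hmeas : ∀ z : B, Measurable fun θ => p θ z)
    (w : Measure Θ) [IsProbabilityMeasure w] (phat : (Fin n → B) → B → ℝ)
    (hr0 : ∀ x y, 0 ≤ phat x y) (hr1 : ∀ x, ∑ y, phat x y ≤ 1)
    (hpos : ∀ x y, 0 < ∫ θ, prodP p n θ x * p θ y ∂w → 0 < phat x y) :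
    condMI p n w ≤ ∫ θ, batchRegret p n phat θ ∂w := by
  classical
  have hcond : condMI p n w = ∫ θ, batchRegret p n (mixPred p n w) θ ∂w := rfl
  set mixw := mixPred p n w with hmixw
  -- a.e. pointwise identity for each (x, y)
  have hxy : ∀ x : Fin n → B, ∀ y : B, ∀ᵐ θ ∂w,
      prodP p n θ x * (p θ y * Real.log (p θ y / phat x y)) -
        prodP p n θ x * (p θ y * Real.log (p θ y / mixw x y)) =
      prodP p n θ x * p θ y * (Real.log (mixw x y) - Real.log (phat x y)) := by
    intro x y
    rcases (NN_nonneg hp hmeas w x y).lt_or_eq with hN | hN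
    · -- positive case : pointwise identity
      refine ae_of_all _ fun θ => ?_
      have hmixpos : 0 < mixw x y := mixPred_pos_of_NN_pos hp hmeas w x y hN
      have hphatpos : 0 < phat x y := hpos x y hN
      by_cases hpy : p θ y = 0
      · simp [hpy]
      · have hpy' : 0 < p θ y := lt_of_le_of_ne ((hp θ).1 y) (Ne.symm hpy)
        rw [Real.log_div (ne_of_gt hpy') (ne_of_gt hphatpos),
          Real.log_div (ne_of_gt hpy') (ne_of_gt hmixpos)]
        ring
    · -- zero case : a.e. the factor vanishes
      filter_upwards [ae_zero_of_NN_eq_zero hp hmeas w x y hN.symm] with θ hθ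
      rcases mul_eq_zero.1 hθ with h2 | h2 <;> simp [h2]
  -- combine over the finitely many (x, y)
  have hae : ∀ᵐ θ ∂w,
      batchRegret p n phat θ - batchRegret p n mixw θ =
        ∑ x : Fin n → B, ∑ y : B,
          prodP p n θ x * p θ y * (Real.log (mixw x y) - Real.log (phat x y)) := by
    have hall : ∀ᵐ θ ∂w, ∀ x : Fin n → B, ∀ y : B,
        prodP p n θ x * (p θ y * Real.log (p θ y / phat x y)) -
          prodP p n θ x * (p θ y * Real.log (p θ y / mixw x y)) =
        prodP p n θ x * p θ y * (Real.log (mixw x y) - Real.log (phat x y)) := by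
      rw [ae_all_iff]
      intro x
      rw [ae_all_iff]
      exact hxy x
    filter_upwards [hall] with θ hθ
    rw [batchRegret_eq_dsum, batchRegret_eq_dsum, ← Finset.sum_sub_distrib]
    refine Finset.sum_congr rfl fun x _ => ?_
    rw [← Finset.sum_sub_distrib]
    exact Finset.sum_congr rfl fun y _ => hθ x y
  -- integrate
  have hint : ∫ θ, (batchRegret p n phat θ - batchRegret p n mixw θ) ∂w =
      ∑ x : Fin n → B, ∑ y : B,
        (∫ θ, prodP p n θ x * p θ y ∂w) * (Real.log (mixw x y) - Real.log (phat x y)) := by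
    rw [integral_congr_ae hae]
    rw [integral_finset_sum _ (fun x _ => ?_)]
    · refine Finset.sum_congr rfl fun x _ => ?_
      rw [integral_finset_sum _ (fun y _ => ?_)]
      · exact Finset.sum_congr rfl fun y _ => integral_mul_const _ _
      · exact (integrable_prodP_mul hp hmeas w x y).mul_const _
    · exact integrable_finset_sum _ fun y _ =>
        (integrable_prodP_mul hp hmeas w x y).mul_const _
  -- nonnegativity of the correction term
  have hnonneg : 0 ≤ ∑ x : Fin n → B, ∑ y : B,
      (∫ θ, prodP p n θ x * p θ y ∂w) * (Real.log (mixw x y) - Real.log (phat x y)) := by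
    refine Finset.sum_nonneg fun x _ => ?_
    by_cases hD : ∫ θ, prodP p n θ x ∂w = 0
    · have : ∀ y : B, (∫ θ, prodP p n θ x * p θ y ∂w) = 0 :=
        fun y => NN_eq_zero_of_DD_eq_zero hp hmeas w x y hD
      simp [this]
    · have hDpos : 0 < ∫ θ, prodP p n θ x ∂w :=
        lt_of_le_of_ne (DD_nonneg hp hmeas w x) (Ne.symm hD)
      have hNmix : ∀ y : B, (∫ θ, prodP p n θ x * p θ y ∂w) =
          mixw x y * ∫ θ, prodP p n θ x ∂w := by
        intro y
        rw [hmixw]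
        unfold mixPred
        rw [div_mul_cancel₀ _ hD]
      have hgibbs : 0 ≤ ∑ y : B, mixw x y * (Real.log (mixw x y) - Real.log (phat x y)) := by
        refine gibbs _ _ (fun y => mixPred_nonneg hp hmeas w x y)
          (sum_mixPred hp hmeas w x hD) (hr0 x) (hr1 x) (fun y hy => ?_)
        refine hpos x y ?_
        rw [hNmix y]
        exact mul_pos hy hDpos
      calc (0:ℝ) ≤ (∫ θ, prodP p n θ x ∂w) *
            ∑ y : B, mixw x y * (Real.log (mixw x y) - Real.log (phat x y)) :=
          mul_nonneg hDpos.le hgibbs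
        _ = ∑ y : B, (∫ θ, prodP p n θ x * p θ y ∂w) *
              (Real.log (mixw x y) - Real.log (phat x y)) := by
          rw [Finset.mul_sum]
          refine Finset.sum_congr rfl fun y _ => ?_
          rw [hNmix y]; ring
  have hib1 := integrable_batchRegret hp hmeas w phat
  have hib2 := integrable_batchRegret hp hmeas w mixw
  have hsub : (∫ θ, batchRegret p n phat θ ∂w) - ∫ θ, batchRegret p n mixw θ ∂w =
      ∑ x : Fin n → B, ∑ y : B,
        (∫ θ, prodP p n θ x * p θ y ∂w) * (Real.log (mixw x y) - Real.log (phat x y)) := by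
    rw [← integral_sub hib1 hib2]
    exact hint
  rw [hcond]
  linarith [hnonneg, hsub]

end KeyL

section Pert
set_option linter.unusedSectionVars false

/-- The perturbed prior `(1-ε) w* + ε δ_{θ₀}`. -/
noncomputable def pertM {Θ : Type*} [MeasurableSpace Θ] (wstar : Measure Θ) (θ₀ : Θ)
    (ε : ℝ) : Measure Θ :=
  ENNReal.ofReal (1 - ε) • wstar + ENNReal.ofReal ε • MeasureTheory.Measure.dirac θ₀

variable {Θ B : Type*} [Fintype B] [MeasurableSpace Θ]
  {p : Θ → B → ℝ} {n : ℕ}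

lemma pertM_prob (wstar : Measure Θ) [IsProbabilityMeasure wstar] (θ₀ : Θ) {ε : ℝ}
    (hε0 : 0 ≤ ε) (hε1 : ε ≤ 1) : IsProbabilityMeasure (pertM wstar θ₀ ε) := by
  constructor
  rw [pertM, Measure.add_apply, Measure.smul_apply, Measure.smul_apply,
    measure_univ, measure_univ, smul_eq_mul, smul_eq_mul, mul_one, mul_one,
    ← ENNReal.ofReal_add (by linarith) hε0]
  norm_num

lemma integrable_of_bdd {Θ : Type*} [MeasurableSpace Θ] {f : Θ → ℝ}
    (hm : Measurable f) (M : ℝ) (hb : ∀ θ, |f θ| ≤ M) (w : Measure Θ) [IsFiniteMeasure w] :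
    Integrable f w :=
  (integrable_const M).mono' hm.aestronglyMeasurable (ae_of_all _ hb)

lemma integral_pertM (wstar : Measure Θ) [IsProbabilityMeasure wstar] (θ₀ : Θ) {ε : ℝ}
    (hε0 : 0 ≤ ε) (hε1 : ε ≤ 1) {f : Θ → ℝ} (hm : Measurable f) (M : ℝ)
    (hb : ∀ θ, |f θ| ≤ M) :
    ∫ θ, f θ ∂(pertM wstar θ₀ ε) = (1 - ε) * (∫ θ, f θ ∂wstar) + ε * f θ₀ := by
  have h1 : Integrable f (ENNReal.ofReal (1 - ε) • wstar) :=
    (integrable_of_bdd hm M hb wstar).smul_measure ENNReal.ofReal_ne_top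
  have h2 : Integrable f (ENNReal.ofReal ε • MeasureTheory.Measure.dirac θ₀) :=
    (integrable_of_bdd hm M hb _).smul_measure ENNReal.ofReal_ne_top
  rw [pertM, integral_add_measure h1 h2, integral_smul_measure, integral_smul_measure,
    integral_dirac' f θ₀ hm.stronglyMeasurable, ENNReal.toReal_ofReal (by linarith),
    ENNReal.toReal_ofReal hε0, smul_eq_mul, smul_eq_mul]

end Pert

section Step1
set_option linter.unusedSectionVars false
variable {Θ B : Type*} [Fintype B] [MeasurableSpace Θ]
  {p : Θ → B → ℝ} {n : ℕ}
  (hp : ∀ θ, IsPMF (p θ)) (hmeas : ∀ z : B, Measurable fun θ => p θ z)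
  (wstar : Measure Θ) [IsProbabilityMeasure wstar] (θ₀ : Θ)
include hp hmeas

lemma abs_prodP_mul_le_one (θ : Θ) (x : Fin n → B) (y : B) :
    |prodP p n θ x * p θ y| ≤ 1 := by
  rw [abs_of_nonneg (mul_nonneg (prodP_nonneg hp θ x) ((hp θ).1 y))]
  calc prodP p n θ x * p θ y ≤ 1 * 1 :=
    mul_le_mul (prodP_le_one hp θ x) (p_le_one hp θ y) ((hp θ).1 y) zero_le_one
  _ = 1 := one_mul 1

lemma abs_prodP_le_one (θ : Θ) (x : Fin n → B) : |prodP p n θ x| ≤ 1 := by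
  rw [abs_of_nonneg (prodP_nonneg hp θ x)]
  exact prodP_le_one hp θ x

lemma NN_pertM {ε : ℝ} (hε0 : 0 ≤ ε) (hε1 : ε ≤ 1) (x : Fin n → B) (y : B) :
    ∫ θ, prodP p n θ x * p θ y ∂(pertM wstar θ₀ ε) =
      (1 - ε) * (∫ θ, prodP p n θ x * p θ y ∂wstar) + ε * (prodP p n θ₀ x * p θ₀ y) :=
  integral_pertM wstar θ₀ hε0 hε1 ((meas_prodP hmeas x).mul (hmeas y)) 1
    (fun θ => abs_prodP_mul_le_one hp hmeas θ x y)

lemma DD_pertM {ε : ℝ} (hε0 : 0 ≤ ε) (hε1 : ε ≤ 1) (x : Fin n → B) :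
    ∫ θ, prodP p n θ x ∂(pertM wstar θ₀ ε) =
      (1 - ε) * (∫ θ, prodP p n θ x ∂wstar) + ε * prodP p n θ₀ x :=
  integral_pertM wstar θ₀ hε0 hε1 (meas_prodP hmeas x) 1
    (fun θ => abs_prodP_le_one hp hmeas θ x)

lemma regret_pert_le {ε : ℝ} (hε0 : 0 < ε) (hε1 : ε < 1)
    (hopt : condMI p n (pertM wstar θ₀ ε) ≤ condMI p n wstar) :
    batchRegret p n (mixPred p n (pertM wstar θ₀ ε)) θ₀ ≤ condMI p n wstar := by
  haveI := pertM_prob wstar θ₀ hε0.le hε1.le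
  set wε := pertM wstar θ₀ ε with hwε
  have hIle : condMI p n wstar ≤ ∫ θ, batchRegret p n (mixPred p n wε) θ ∂wstar := by
    refine keyL hp hmeas wstar _ (fun x y => mixPred_nonneg hp hmeas wε x y)
      (fun x => sum_mixPred_le_one hp hmeas wε x) (fun x y hNpos => ?_)
    refine mixPred_pos_of_NN_pos hp hmeas wε x y ?_
    rw [hwε, NN_pertM hp hmeas wstar θ₀ hε0.le hε1.le x y]
    have h2 : 0 ≤ prodP p n θ₀ x * p θ₀ y :=
      mul_nonneg (prodP_nonneg hp θ₀ x) ((hp θ₀).1 y)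
    nlinarith
  have hexp : condMI p n wε = (1 - ε) * (∫ θ, batchRegret p n (mixPred p n wε) θ ∂wstar)
      + ε * batchRegret p n (mixPred p n wε) θ₀ := by
    have h0 : condMI p n wε = ∫ θ, batchRegret p n (mixPred p n wε) θ ∂wε := rfl
    rw [h0, hwε]
    exact integral_pertM wstar θ₀ hε0.le hε1.le
      (meas_batchRegret hmeas _) _ (batchRegret_abs_le hp _)
  set C := condMI p n wstar
  set Iε := ∫ θ, batchRegret p n (mixPred p n wε) θ ∂wstar
  set R := batchRegret p n (mixPred p n wε) θ₀
  have h1 : (1 - ε) * C ≤ (1 - ε) * Iε := mul_le_mul_of_nonneg_left hIle (by linarith)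
  have h2 : ε * R ≤ ε * C := by rw [hexp] at hopt; linarith
  exact le_of_mul_le_mul_left h2 hε0
end Step1

section AuxTendsto
open Set

lemma aux_tendsto (P a Ns Ds : ℝ) (hP : 0 ≤ P) (ha : 0 ≤ a) (hNs : 0 ≤ Ns)
    (hND : Ns ≤ Ds) (g : ℝ → ℝ)
    (hg : ∀ ε ∈ Set.Ioo (0:ℝ) 1, g ε = ((1-ε)*Ns + ε*(P*a)) / ((1-ε)*Ds + ε*P)) :
    Filter.Tendsto (fun ε => min (P*(a*Real.log (a / g ε))) (P*(a*Real.log (a / (Ns/Ds)))))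
      (nhdsWithin (0:ℝ) (Set.Ioi 0)) (nhds (P*(a*Real.log (a / (Ns/Ds))))) := by
  have hDs0 : 0 ≤ Ds := le_trans hNs hND
  have hev : Set.Ioo (0:ℝ) 1 ∈ nhdsWithin (0:ℝ) (Set.Ioi 0) :=
    Ioo_mem_nhdsGT_of_mem (by constructor <;> norm_num)
  rcases eq_or_lt_of_le ha with ha' | ha'
  · simp only [← ha', zero_mul, mul_zero, min_self]; exact tendsto_const_nhds
  rcases eq_or_lt_of_le hP with hP' | hP'
  · simp only [← hP', zero_mul, min_self]; exact tendsto_const_nhds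
  rcases eq_or_lt_of_le hDs0 with hDs' | hDs'
  · -- Ds = 0 hence Ns = 0; both sides vanish
    have hNs' : Ns = 0 := le_antisymm (hDs' ▸ hND) hNs
    have hT : P*(a*Real.log (a / (Ns/Ds))) = 0 := by
      rw [hNs', zero_div, div_zero, Real.log_zero, mul_zero, mul_zero]
    rw [hT]
    refine Filter.Tendsto.congr' ?_ (tendsto_const_nhds (x := (0:ℝ)))
    filter_upwards [hev] with ε hε
    obtain ⟨hε0, hε1⟩ := hε
    have hgε : g ε = a := by
      rw [hg ε ⟨hε0, hε1⟩, hNs', ← hDs', mul_zero, zero_add, zero_add,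
        show ε*(P*a) = (ε*P)*a by ring,
        mul_div_assoc, mul_comm, div_mul_cancel₀ a (ne_of_gt (mul_pos hε0 hP'))]
    rw [hgε, div_self (ne_of_gt ha'), Real.log_one, mul_zero, mul_zero, min_self]
  rcases eq_or_lt_of_le hNs with hNs' | hNs'
  · -- Ns = 0, Ds > 0 : target is 0 (junk value), perturbed terms are ≥ 0
    have hT : P*(a*Real.log (a / (Ns/Ds))) = 0 := by
      rw [← hNs', zero_div, div_zero, Real.log_zero, mul_zero, mul_zero]
    rw [hT]
    refine Filter.Tendsto.congr' ?_ (tendsto_const_nhds (x := (0:ℝ)))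
    filter_upwards [hev] with ε hε
    obtain ⟨hε0, hε1⟩ := hε
    have hden : 0 < (1-ε)*Ds + ε*P := by nlinarith
    have hgε : g ε = ε*(P*a) / ((1-ε)*Ds + ε*P) := by
      rw [hg ε ⟨hε0, hε1⟩, ← hNs', mul_zero, zero_add]
    have hquot : 1 ≤ a / g ε := by
      rw [hgε, div_div_eq_mul_div, le_div_iff₀ (by positivity : (0:ℝ) < ε*(P*a))]
      nlinarith [mul_nonneg (mul_nonneg ha (by linarith : (0:ℝ) ≤ 1-ε)) hDs'.le]
    have hterm : 0 ≤ P*(a*Real.log (a / g ε)) :=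
      mul_nonneg hP (mul_nonneg ha (Real.log_nonneg hquot))
    exact (min_eq_right hterm).symm
  · -- Ns > 0 : continuity
    have hmixpos : 0 < Ns/Ds := div_pos hNs' hDs'
    have hnum : Filter.Tendsto (fun ε : ℝ => (1-ε)*Ns + ε*(P*a)) (nhds 0) (nhds Ns) := by
      have : Continuous fun ε : ℝ => (1-ε)*Ns + ε*(P*a) := by continuity
      have h := this.tendsto 0
      simpa using h
    have hden : Filter.Tendsto (fun ε : ℝ => (1-ε)*Ds + ε*P) (nhds 0) (nhds Ds) := by
      have : Continuous fun ε : ℝ => (1-ε)*Ds + ε*P := by continuity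
      have h := this.tendsto 0
      simpa using h
    have hfrac : Filter.Tendsto (fun ε : ℝ => ((1-ε)*Ns + ε*(P*a)) / ((1-ε)*Ds + ε*P))
        (nhds 0) (nhds (Ns/Ds)) := hnum.div hden (ne_of_gt hDs')
    have hfrac' : Filter.Tendsto g (nhdsWithin (0:ℝ) (Set.Ioi 0)) (nhds (Ns/Ds)) := by
      refine Filter.Tendsto.congr' ?_ (hfrac.mono_left nhdsWithin_le_nhds)
      filter_upwards [hev] with ε hε
      exact (hg ε hε).symm
    have hdiv : Filter.Tendsto (fun ε => a / g ε) (nhdsWithin (0:ℝ) (Set.Ioi 0))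
        (nhds (a / (Ns/Ds))) :=
      Filter.Tendsto.div tendsto_const_nhds hfrac' (ne_of_gt hmixpos)
    have hlog : Filter.Tendsto (fun ε => Real.log (a / g ε)) (nhdsWithin (0:ℝ) (Set.Ioi 0))
        (nhds (Real.log (a / (Ns/Ds)))) :=
      Filter.Tendsto.comp (Real.continuousAt_log (ne_of_gt (div_pos ha' hmixpos))) hdiv
    have hterm : Filter.Tendsto (fun ε => P*(a*Real.log (a / g ε)))
        (nhdsWithin (0:ℝ) (Set.Ioi 0)) (nhds (P*(a*Real.log (a / (Ns/Ds))))) :=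
      (hlog.const_mul a).const_mul P
    have := hterm.min (tendsto_const_nhds (x := P*(a*Real.log (a / (Ns/Ds)))))
    rwa [min_self] at this

end AuxTendsto

/-- **Conditional regret-capacity theorem.** If a prior probability measure `w*`
attains `sup_w I_w(θ;Y|X^n)`, then the minimax batch regret equals `I_{w*}(θ;Y|X^n)` and is
achieved by the conditional mixture predictor `p̂*` of `w*`:
(i) `R(p̂*,θ) ≤ I_{w*}(θ;Y|X^n)` for all `θ` (so `sup_θ R(p̂*,θ) ≤ I_{w*}`), and
(ii) for every (everywhere positive) batch predictor `p̂`, any upper bound `C` of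
`θ ↦ R(p̂,θ)` satisfies `C ≥ I_{w*}(θ;Y|X^n)` (so `sup_θ R(p̂,θ) ≥ I_{w*}`). -/
theorem conditional_regret_capacity
    {𝒳 Θ : Type*} [Fintype 𝒳] [Nonempty 𝒳] [MeasurableSpace Θ]
    (ℓ n : ℕ) (hℓ : 0 < ℓ) (hn : 0 < n)
    (p : Θ → (Fin ℓ → 𝒳) → ℝ)
    (hp : ∀ θ, IsPMF (p θ))
    (hmeas : ∀ z : Fin ℓ → 𝒳, Measurable fun θ => p θ z)
    (wstar : Measure Θ) [IsProbabilityMeasure wstar]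
    (hopt : ∀ w : Measure Θ, IsProbabilityMeasure w →
      condMI p n w ≤ condMI p n wstar) :
    (∀ θ : Θ, batchRegret p n (mixPred p n wstar) θ ≤ condMI p n wstar)
    ∧ (∀ phat : (Fin n → Fin ℓ → 𝒳) → (Fin ℓ → 𝒳) → ℝ,
        (∀ x, IsPMF (phat x)) → (∀ x y, 0 < phat x y) →
        ∀ C : ℝ, (∀ θ : Θ, batchRegret p n phat θ ≤ C) →
          condMI p n wstar ≤ C) := by
  constructor
  · -- part (i)
    intro θ₀
    have hkey : ∀ ε ∈ Set.Ioo (0:ℝ) 1,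
        batchRegret p n (mixPred p n (pertM wstar θ₀ ε)) θ₀ ≤ condMI p n wstar := by
      intro ε hε
      exact regret_pert_le hp hmeas wstar θ₀ hε.1 hε.2
        (hopt _ (pertM_prob wstar θ₀ hε.1.le hε.2.le))
    have htend : Filter.Tendsto (fun ε : ℝ => ∑ x : Fin n → Fin ℓ → 𝒳, ∑ y : Fin ℓ → 𝒳,
        min (prodP p n θ₀ x *
              (p θ₀ y * Real.log (p θ₀ y / mixPred p n (pertM wstar θ₀ ε) x y)))
          (prodP p n θ₀ x * (p θ₀ y * Real.log (p θ₀ y / mixPred p n wstar x y))))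
        (nhdsWithin 0 (Set.Ioi 0)) (nhds (batchRegret p n (mixPred p n wstar) θ₀)) := by
      rw [batchRegret_eq_dsum]
      refine tendsto_finset_sum _ fun x _ => tendsto_finset_sum _ fun y _ => ?_
      refine aux_tendsto _ _ _ _ (prodP_nonneg hp θ₀ x) ((hp θ₀).1 y)
        (NN_nonneg hp hmeas wstar x y) (NN_le_DD hp hmeas wstar x y) _ (fun ε hε => ?_)
      show mixPred p n (pertM wstar θ₀ ε) x y = _
      unfold mixPred
      rw [NN_pertM hp hmeas wstar θ₀ hε.1.le hε.2.le x y,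
        DD_pertM hp hmeas wstar θ₀ hε.1.le hε.2.le x]
    refine le_of_tendsto htend ?_
    filter_upwards [Ioo_mem_nhdsGT_of_mem
      (show (0:ℝ) ∈ Set.Ico (0:ℝ) 1 by constructor <;> norm_num)] with ε hε
    calc ∑ x : Fin n → Fin ℓ → 𝒳, ∑ y : Fin ℓ → 𝒳,
          min (prodP p n θ₀ x *
                (p θ₀ y * Real.log (p θ₀ y / mixPred p n (pertM wstar θ₀ ε) x y)))
            (prodP p n θ₀ x * (p θ₀ y * Real.log (p θ₀ y / mixPred p n wstar x y)))
        ≤ ∑ x : Fin n → Fin ℓ → 𝒳, ∑ y : Fin ℓ → 𝒳,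
            prodP p n θ₀ x *
              (p θ₀ y * Real.log (p θ₀ y / mixPred p n (pertM wstar θ₀ ε) x y)) :=
          Finset.sum_le_sum fun x _ => Finset.sum_le_sum fun y _ => min_le_left _ _
      _ = batchRegret p n (mixPred p n (pertM wstar θ₀ ε)) θ₀ :=
          (batchRegret_eq_dsum _ θ₀).symm
      _ ≤ condMI p n wstar := hkey ε hε
  · -- part (ii)
    intro phat hpmf hpos C hbound
    have h1 : condMI p n wstar ≤ ∫ θ, batchRegret p n phat θ ∂wstar :=
      keyL hp hmeas wstar phat (fun x y => (hpmf x).1 y) (fun x => le_of_eq (hpmf x).2)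
        (fun x y _ => hpos x y)
    have h2 : ∫ θ, batchRegret p n phat θ ∂wstar ≤ C := by
      calc ∫ θ, batchRegret p n phat θ ∂wstar ≤ ∫ _θ, (C:ℝ) ∂wstar :=
            integral_mono (integrable_batchRegret hp hmeas wstar phat)
              (integrable_const C) hbound
        _ = C := by simp
    linarith
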